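/- For positive integers m, k and n ≥ m+k, the ordinary Lah numbers satisfy C(m+k, m) * L(n, m+k) = Σ_{l=m}^{n-k} C(n,l) L(l, m) L(n-l, k). -/

import Mathlib

open Finset

/-- The `r`-Lah numbers `L_r(n,k) = (n!/k!) * C(n+2r-1, k+2r-1)` for `k ≤ n`, and `0` otherwise. -/
def rLah (r n k : ℕ) : ℕ :=
  if k ≤ n then n.factorial / k.factorial * Nat.choose (n + 2 * r - 1) (n - k) else 0

/-- Stirling numbers of the second kind. -/
def stirling2 : ℕ → ℕ → ℕ
  | 0, 0 => 1
  | 0, _ + 1 => 0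
  | _ + 1, 0 => 0
  | n + 1, k + 1 => (k + 1) * stirling2 n (k + 1) + stirling2 n k

/-- Signed Stirling numbers of the first kind, satisfying `(x)_n = Σ_k s(n,k) x^k`. -/
def stirling1 : ℕ → ℕ → ℤ
  | 0, 0 => 1
  | 0, _ + 1 => 0
  | _ + 1, 0 => 0
  | n + 1, k + 1 => stirling1 n k - (n : ℤ) * stirling1 n (k + 1)

/-- Bell numbers. -/
def bell (n : ℕ) : ℕ := ∑ k ∈ Finset.range (n + 1), stirling2 n k

/-- The `r`-extended Bell numbers `B_{n,r} = Σ_k C(n,k) r^(n-k) B_k`. -/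
def bellExt (n r : ℕ) : ℕ :=
  ∑ k ∈ Finset.range (n + 1), Nat.choose n k * r ^ (n - k) * bell k

/-- The `r`-extended Lah-Bell numbers `B^L_{n,r} = Σ_{k=0}^n L_r(n,k)`. -/
def lahBellExt (n r : ℕ) : ℕ := ∑ k ∈ Finset.range (n + 1), rLah r n k

/-- Stirling polynomials of the second kind `S₂(n,k|x) = Σ_j C(n,j) x^(n-j) S₂(j,k)`,
evaluated at a natural number `x`. -/
def stirling2Poly (n k x : ℕ) : ℕ :=
  ∑ j ∈ Finset.Icc k n, Nat.choose n j * x ^ (n - j) * stirling2 j k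

/-- Convolution identity for the ordinary Lah numbers:
`C(m+k,m) L(n,m+k) = Σ_{l=m}^{n-k} C(n,l) L(l,m) L(n-l,k)`. -/


lemma vand (b : ℕ) : ∀ s a : ℕ,
    ∑ i ∈ range (s+1), Nat.choose i a * Nat.choose (s-i) b = Nat.choose (s+1) (a+b+1) := by
  induction b with
  | zero =>
    intro s a
    simp only [Nat.choose_zero_right, mul_one, Nat.add_zero]
    rw [← Nat.sum_Icc_choose s a]
    apply (Finset.sum_subset ?_ ?_).symm
    · intro x hx; simp only [mem_Icc] at hx; simp only [mem_range]; omega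
    · intro x hx hnx
      simp only [mem_range] at hx; simp only [mem_Icc] at hnx
      exact Nat.choose_eq_zero_of_lt (by omega)
  | succ b ih =>
    intro s a
    induction s with
    | zero =>
      simp [Nat.choose_eq_zero_of_lt (show 1 < a + (b+1) + 1 by omega)]
    | succ t ihs =>
      rw [Finset.sum_range_succ, Nat.sub_self, Nat.choose_eq_zero_of_lt (Nat.succ_pos b),
        mul_zero, add_zero]
      have hsplit : ∀ i ∈ range (t+1),
          Nat.choose i a * Nat.choose (t+1-i) (b+1)
            = Nat.choose i a * Nat.choose (t-i) b + Nat.choose i a * Nat.choose (t-i) (b+1) := by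
        intro i hi
        simp only [mem_range] at hi
        rw [show t + 1 - i = (t - i) + 1 by omega, Nat.choose_succ_succ, mul_add]
      rw [Finset.sum_congr rfl hsplit, Finset.sum_add_distrib, ih t a, ihs]
      rw [show a + (b+1) + 1 = (a + b + 1) + 1 by ring, Nat.choose_succ_succ (t+1) (a+b+1)]

lemma lah_key (m k n : ℕ) (hm : 1 ≤ m) (hk : 1 ≤ k) (hn : m + k ≤ n) :
    ∑ l ∈ Icc m (n-k), Nat.choose (l-1) (m-1) * Nat.choose (n-l-1) (k-1)
      = Nat.choose (n-1) (m+k-1) := by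
  have hext : ∑ l ∈ Icc m (n-k), Nat.choose (l-1) (m-1) * Nat.choose (n-l-1) (k-1)
      = ∑ l ∈ Ico 1 n, Nat.choose (l-1) (m-1) * Nat.choose (n-l-1) (k-1) := by
    apply Finset.sum_subset
    · intro x hx; simp only [mem_Icc] at hx; simp only [mem_Ico]; omega
    · intro x hx hnx
      simp only [mem_Ico] at hx; simp only [mem_Icc] at hnx
      rcases Nat.lt_or_ge x m with h | h
      · rw [Nat.choose_eq_zero_of_lt (by omega), zero_mul]
      · rw [Nat.choose_eq_zero_of_lt (show n-x-1 < k-1 by omega), mul_zero]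
  rw [hext, Finset.sum_Ico_eq_sum_range]
  have hre : ∀ i ∈ range (n-1),
      Nat.choose (1+i-1) (m-1) * Nat.choose (n-(1+i)-1) (k-1)
        = Nat.choose i (m-1) * Nat.choose ((n-2)-i) (k-1) := by
    intro i hi
    congr 2 <;> omega
  rw [Finset.sum_congr rfl hre, show n - 1 = (n-2)+1 by omega, vand (k-1) (n-2) (m-1),
    show (n-2)+1 = n-1 by omega, show (m-1)+(k-1)+1 = m+k-1 by omega]


theorem lah_convolution (m k n : ℕ) (hm : 1 ≤ m) (hk : 1 ≤ k) (hn : m + k ≤ n) :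
    Nat.choose (m + k) m * rLah 0 n (m + k) =
      ∑ l ∈ Finset.Icc m (n - k), Nat.choose n l * rLah 0 l m * rLah 0 (n - l) k := by
  have key := lah_key m k n hm hk hn
  apply @Nat.cast_injective ℚ _ _
  have hmk : m + k ≤ n := hn
  -- LHS
  have hL : ((Nat.choose (m + k) m * rLah 0 n (m + k) : ℕ) : ℚ)
      = (n.factorial : ℚ) / (m.factorial * k.factorial) * Nat.choose (n-1) (m+k-1) := by
    rw [rLah, if_pos hmk, show n + 2*0 - 1 = n - 1 by omega,
      show n - (m+k) = (n-1) - (m+k-1) by omega,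
      Nat.choose_symm (show m+k-1 ≤ n-1 by omega)]
    push_cast [Nat.cast_div (Nat.factorial_dvd_factorial hmk)
      (Nat.cast_ne_zero.mpr (Nat.factorial_pos (m+k)).ne' : ((m+k).factorial : ℚ) ≠ 0)]
    have hcN : Nat.choose (m+k) m * m.factorial * k.factorial = (m + k).factorial := by
      have := Nat.choose_mul_factorial_mul_factorial (Nat.le_add_right m k)
      simpa [Nat.add_sub_cancel_left] using this
    have hc : (Nat.choose (m+k) m * m.factorial * k.factorial : ℚ)
        = (m + k).factorial := by exact_mod_cast hcN
    field_simp
    linear_combination ((n-1).choose (m+k-1) : ℚ) * hc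
  have hterm : ∀ l ∈ Icc m (n-k),
      ((Nat.choose n l * rLah 0 l m * rLah 0 (n-l) k : ℕ) : ℚ)
        = (n.factorial : ℚ) / (m.factorial * k.factorial)
            * Nat.choose (l-1) (m-1) * Nat.choose (n-l-1) (k-1) := by
    intro l hl
    simp only [mem_Icc] at hl
    have hml : m ≤ l := hl.1
    have hkl : k ≤ n - l := by omega
    have hln : l ≤ n := by omega
    rw [rLah, rLah, if_pos hml, if_pos hkl,
      show l + 2*0 - 1 = l - 1 by omega, show (n-l) + 2*0 - 1 = n-l-1 by omega,
      show l - m = (l-1) - (m-1) by omega,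
      Nat.choose_symm (show m-1 ≤ l-1 by omega),
      show n - l - k = (n-l-1) - (k-1) by omega,
      Nat.choose_symm (show k-1 ≤ n-l-1 by omega)]
    push_cast [Nat.cast_div (Nat.factorial_dvd_factorial hml)
        (Nat.cast_ne_zero.mpr (Nat.factorial_pos m).ne' : (m.factorial : ℚ) ≠ 0),
      Nat.cast_div (Nat.factorial_dvd_factorial hkl)
        (Nat.cast_ne_zero.mpr (Nat.factorial_pos k).ne' : (k.factorial : ℚ) ≠ 0)]
    have hc : (Nat.choose n l * l.factorial * (n-l).factorial : ℚ) = n.factorial := by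
      exact_mod_cast congrArg (Nat.cast (R := ℚ))
        (Nat.choose_mul_factorial_mul_factorial hln)
    field_simp
    linear_combination ((l-1).choose (m-1) : ℚ) * ((n-l-1).choose (k-1) : ℚ) * hc
  rw [hL, Nat.cast_sum, Finset.sum_congr rfl hterm]
  rw [← key]
  push_cast [Finset.mul_sum]
  apply Finset.sum_congr rfl
  intro l hl
  ring
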